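/- If d ≥ 2 is such that d | pq and H(p,q,d) ≅ B(d,1) = K_d^+ (the complete digraph on d vertices with loops, which is a line digraph), then d | p and d | q; combined with pq/d = d (the vertex count), this forces p = q = d. Hence B(d,1) has a unique OTIS layout. -/
import Mathlib


/-- The OTIS transpose map: for a = iq+j (0 ≤ i < p, 0 ≤ j < q), tau a = (q-1-j)p + (p-1-i). -/
def tau (p q a : ℕ) : ℕ := (q - 1 - a % q) * p + (p - 1 - a / q)

/-- Arc multiplicity from vertex u to vertex v in H(p,q,d). -/
def mult (p q d u v : ℕ) : ℕ :=
  ((Finset.range d).filter (fun r => tau p q (d * u + r) / d = v)).card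

/-- There is an arc from u to v in H(p,q,d). -/
def arc (p q d u v : ℕ) : Prop := ∃ r < d, tau p q (d * u + r) / d = v

/-- If `c < d` then `(d*d - 1 - c) / d = d - 1`. -/
lemma div_pred_aux (d c : ℕ) (hd : 1 < d) (hc : c < d) : (d * d - 1 - c) / d = d - 1 := by
  have e : (d - 1) * d = d * d - d := by rw [Nat.sub_mul, one_mul]
  have key : d * d - 1 - c = (d - 1 - c) + (d - 1) * d := by
    have hdd : d ≤ d * d := Nat.le_mul_of_pos_left d (by omega)
    omega
  rw [key, Nat.add_mul_div_right _ _ (by omega : 0 < d), Nat.div_eq_of_lt (by omega)]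
  omega

theorem stmt_16 (p q d : ℕ) (hp : 1 < p) (hq : 1 < q) (hd : 1 < d) (hdiv : d ∣ p * q)
    (hcard : p * q / d = d)
    (hK : ∀ u < d, ∀ v < d, mult p q d u v = 1) :
    d ∣ p ∧ d ∣ q ∧ p = d ∧ q = d := by
  have hpq : p * q = d * d := by
    obtain ⟨k, hk⟩ := hdiv
    have hk' : d * k / d = k := Nat.mul_div_cancel_left _ (by omega)
    rw [hk, hk'] at hcard
    rw [hk, hcard]
  have hqp : q * p = d * d := by rw [mul_comm]; exact hpq
  have hsub : (q - 1) * p = q * p - p := by rw [Nat.sub_mul, one_mul]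
  have h2d : 2 * d ≤ d * d := Nat.mul_le_mul_right d hd
  have hple : p ≤ d * d := by
    have := Nat.le_mul_of_pos_left p (show 0 < q by omega)
    omega
  have t0 : tau p q 0 = d * d - 1 := by
    simp only [tau, Nat.zero_mod, Nat.zero_div, Nat.sub_zero]
    rw [hsub, hqp]
    omega
  have d0 : tau p q 0 / d = d - 1 := by
    rw [t0]
    have := div_pred_aux d 0 hd (by omega)
    simpa using this
  -- d ≤ p
  have hdp : d ≤ p := by
    by_contra h
    push_neg at h
    have t1 : tau p q 1 = d * d - 1 - p := by
      have h1 : (1 : ℕ) % q = 1 := Nat.mod_eq_of_lt hq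
      have h2 : (1 : ℕ) / q = 0 := Nat.div_eq_of_lt hq
      have hsub2 : (q - 1 - 1) * p = q * p - p - p := by
        rw [Nat.sub_mul, Nat.sub_mul, one_mul]
      simp only [tau, h1, h2, Nat.sub_zero]
      rw [hsub2, hqp]
      omega
    have d1 : tau p q 1 / d = d - 1 := by
      rw [t1]; exact div_pred_aux d p hd h
    have hmul : mult p q d 0 (d - 1) = 1 := hK 0 (by omega) (d - 1) (by omega)
    have hsubset : ({0, 1} : Finset ℕ) ⊆
        (Finset.range d).filter (fun r => tau p q (d * 0 + r) / d = d - 1) := by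
      intro r hr
      simp only [Finset.mem_insert, Finset.mem_singleton] at hr
      rcases hr with rfl | rfl <;>
        simp only [Finset.mem_filter, Finset.mem_range, mul_zero, zero_add] <;>
        exact ⟨by omega, by assumption⟩
    have hcard2 : (2 : ℕ) ≤ mult p q d 0 (d - 1) := by
      have hle := Finset.card_le_card hsubset
      have hc : ({0, 1} : Finset ℕ).card = 2 := by decide
      rw [hc] at hle
      exact hle
    omega
  -- d ≤ q
  have hdq : d ≤ q := by
    by_contra h
    push_neg at h
    have tq : tau p q q = d * d - 1 - 1 := by
      have h1 : q % q = 0 := Nat.mod_self q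
      have h2 : q / q = 1 := Nat.div_self (by omega)
      simp only [tau, h1, h2, Nat.sub_zero]
      rw [hsub, hqp]
      omega
    have dq : tau p q q / d = d - 1 := by
      rw [tq]; exact div_pred_aux d 1 hd (by omega)
    have hmul : mult p q d 0 (d - 1) = 1 := hK 0 (by omega) (d - 1) (by omega)
    have hsubset : ({0, q} : Finset ℕ) ⊆
        (Finset.range d).filter (fun r => tau p q (d * 0 + r) / d = d - 1) := by
      intro r hr
      simp only [Finset.mem_insert, Finset.mem_singleton] at hr
      rcases hr with rfl | rfl <;>
        simp only [Finset.mem_filter, Finset.mem_range, mul_zero, zero_add] <;>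
        exact ⟨by omega, by assumption⟩
    have hcard2 : (2 : ℕ) ≤ mult p q d 0 (d - 1) := by
      have hle := Finset.card_le_card hsubset
      have hc : ({0, q} : Finset ℕ).card = 2 := by
        rw [Finset.card_insert_of_notMem (by simp; omega), Finset.card_singleton]
      rw [hc] at hle
      exact hle
    omega
  -- conclude p = d and q = d
  have hpd : p = d := by
    by_contra hne
    have hlt : d + 1 ≤ p := by omega
    have h1 : (d + 1) * d ≤ p * q := Nat.mul_le_mul hlt hdq
    have h2 : (d + 1) * d = d * d + d := by ring
    omega
  have hqd : q = d := by
    have : d * q = d * d := by rw [← hpd, mul_comm] at hpq ⊢; exact hpq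
    exact Nat.eq_of_mul_eq_mul_left (by omega) this
  exact ⟨hpd ▸ dvd_refl d, hqd ▸ dvd_refl d, hpd, hqd⟩
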